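/- Let F be twice differentiable on [0,U) with density f, survival S, hazard h = f/S, and suppose w(v) = v - 1/h(v) is strictly increasing. Then for any ε > 0 and any v with v - ε ≥ 0 in the support: ∫_{v-ε}^{v} h(t) dt > ln(1 + h(v-ε)·ε). -/
import Mathlib


open Set intervalIntegral

/-- If `F` is twice differentiable on `[0, U)` with density `f`, survival `S`,
hazard `h = f/S`, and `w v = v - 1/h v` strictly increasing, then for any
`ε > 0` and any `v` with `v - ε ≥ 0` in the support:
`∫_{v-ε}^{v} h(t) dt > ln(1 + h(v-ε)·ε)`. -/
theorem hazard_integral_gt_log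
    (U : ℝ) (hU : 0 < U)
    (f f' S h : ℝ → ℝ)
    (hSderiv : ∀ v ∈ Ico 0 U, HasDerivAt S (-(f v)) v)
    (hfderiv : ∀ v ∈ Ico 0 U, HasDerivAt f (f' v) v)
    (hfpos : ∀ v ∈ Ico 0 U, 0 < f v)
    (hSpos : ∀ v ∈ Ico 0 U, 0 < S v)
    (hh : ∀ v, h v = f v / S v)
    (hcont : ContinuousOn h (Ico 0 U))
    (hw : StrictMonoOn (fun v => v - 1 / h v) (Ico 0 U))
    (ε v : ℝ) (hε : 0 < ε) (hve : 0 ≤ v - ε) (hvU : v < U) :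
    ∫ t in (v - ε)..v, h t > Real.log (1 + h (v - ε) * ε) := by
  set a := v - ε with ha
  have hav : a < v := by simp [ha]; linarith
  have hsub : Icc a v ⊆ Ico 0 U := fun t ht => ⟨le_trans hve ht.1, lt_of_le_of_lt ht.2 hvU⟩
  have hpos : ∀ t ∈ Ico 0 U, 0 < h t := fun t ht => by
    rw [hh]; exact div_pos (hfpos t ht) (hSpos t ht)
  have haI : a ∈ Ico 0 U := hsub ⟨le_refl a, hav.le⟩
  have hha : 0 < h a := hpos a haI
  set c := 1 / h a with hc
  have hcpos : 0 < c := one_div_pos.mpr hha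
  -- value of the comparison integral
  have key : ∫ t in a..v, 1 / (t - a + c) = Real.log (1 + h a * ε) := by
    have : ∫ t in a..v, 1 / (t - a + c) = ∫ t in a..v, (fun x => 1 / x) (t + (c - a)) := by
      congr 1; ext t; ring_nf
    rw [this, intervalIntegral.integral_comp_add_right (fun x => 1 / x) (c - a)]
    have h1 : a + (c - a) = c := by ring
    have h2 : v + (c - a) = ε + c := by simp [ha]; ring
    rw [h1, h2, integral_one_div]
    · congr 1
      rw [hc]
      field_simp
      ring
    · intro hmem
      rw [Set.mem_uIcc] at hmem
      rcases hmem with ⟨h1, _⟩ | ⟨h2, _⟩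
      · linarith
      · linarith
  rw [← key]
  apply intervalIntegral.integral_lt_integral_of_continuousOn_of_le_of_exists_lt hav
  · -- continuity of comparison function
    apply ContinuousOn.div continuousOn_const
    · exact ((continuousOn_id.sub continuousOn_const).add continuousOn_const)
    · intro t ht; have := ht.1; dsimp; linarith
  · exact hcont.mono hsub
  · -- pointwise inequality on Ioc
    intro t ht
    have htI : t ∈ Ico 0 U := hsub ⟨ht.1.le, ht.2⟩
    have hmono := hw haI htI ht.1
    simp only at hmono
    have hht : 0 < h t := hpos t htI
    have hD : 0 < t - a + c := by linarith [ht.1]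
    have h1 : 1 / h t < t - a + c := by linarith
    have := one_div_lt_one_div_of_lt (one_div_pos.mpr hht) h1
    rw [one_div_one_div] at this
    exact this.le
  · -- strict at v
    refine ⟨v, ⟨hav.le, le_refl v⟩, ?_⟩
    have hvI : v ∈ Ico 0 U := hsub ⟨hav.le, le_refl v⟩
    have hmono := hw haI hvI hav
    simp only at hmono
    have hhv : 0 < h v := hpos v hvI
    have hD : 0 < v - a + c := by linarith
    have h1 : 1 / h v < v - a + c := by linarith
    have := one_div_lt_one_div_of_lt (one_div_pos.mpr hhv) h1
    rwa [one_div_one_div] at this
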